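/- Fix δ ∈ (0, 1/4) and R > 0. For every x, x₀ ∈ ℝ² with |x - x₀| ≥ R and every t with t₀ - t ∈ [δ²R², 4δ²R²], one has (t₀ - t)^{-1} exp(-|x-x₀|²/(4(t₀-t))) ≤ 2 δ^{-2} exp(-1/(32 δ²)) · (t₀ + R² - t)^{-1} exp(-|x-x₀|²/(4(t₀ + R² - t))). -/

import Mathlib

theorem stmt6 (δ R t t₀ : ℝ) (hδ : δ ∈ Set.Ioo (0 : ℝ) (1/4)) (hR : 0 < R)
    (x x₀ : EuclideanSpace ℝ (Fin 2)) (hx : R ≤ ‖x - x₀‖)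
    (ht : t₀ - t ∈ Set.Icc (δ ^ 2 * R ^ 2) (4 * δ ^ 2 * R ^ 2)) :
    (t₀ - t)⁻¹ * Real.exp (-‖x - x₀‖ ^ 2 / (4 * (t₀ - t))) ≤
      2 * δ⁻¹ ^ 2 * Real.exp (-1 / (32 * δ ^ 2)) *
        ((t₀ + R ^ 2 - t)⁻¹ * Real.exp (-‖x - x₀‖ ^ 2 / (4 * (t₀ + R ^ 2 - t)))) := by
  obtain ⟨hδ0, hδ4⟩ := hδ
  obtain ⟨ht1, ht2⟩ := ht
  set r : ℝ := ‖x - x₀‖ with hr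
  set a : ℝ := t₀ - t with ha
  set b : ℝ := t₀ + R ^ 2 - t with hb
  have hba : b = a + R ^ 2 := by rw [ha, hb]; ring
  have ha0 : 0 < a := lt_of_lt_of_le (by positivity) ht1
  have hb0 : 0 < b := by rw [hba]; positivity
  have hA : a⁻¹ ≤ 2 * δ⁻¹ ^ 2 * b⁻¹ := by
    have h2 : 2 * δ⁻¹ ^ 2 * b⁻¹ = 2 / (δ ^ 2 * b) := by
      field_simp
    rw [h2, inv_eq_one_div, div_le_div_iff₀ ha0 (by positivity)]
    nlinarith [ht1, mul_pos (show (0:ℝ) < 1 - δ ^ 2 by nlinarith) ha0]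
  have hB : -r ^ 2 / (4 * a) ≤ -1 / (32 * δ ^ 2) + -r ^ 2 / (4 * b) := by
    rw [div_add_div _ _ (by positivity) (by positivity),
      div_le_div_iff₀ (by positivity) (by positivity)]
    have hr2 : R ^ 2 ≤ r ^ 2 := by nlinarith
    have hδ2 : δ ^ 2 ≤ 1 / 16 := by nlinarith
    have h1 : a * (a + R ^ 2) ≤ 4 * δ ^ 2 * R ^ 2 * (4 * δ ^ 2 * R ^ 2 + R ^ 2) :=
      mul_le_mul ht2 (by nlinarith) (by positivity) (by positivity)
    have key : 16 * (a * (a + R ^ 2)) ≤ 128 * δ ^ 2 * (r ^ 2 * R ^ 2) := by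
      nlinarith [h1, hr2, hδ2, sq_nonneg R, mul_le_mul_of_nonneg_left hr2
        (by positivity : (0:ℝ) ≤ 128 * δ ^ 2), mul_nonneg (mul_nonneg (by positivity : (0:ℝ) ≤ δ ^ 2) (sq_nonneg R)) (sq_nonneg R)]
    rw [hba]
    nlinarith [key]
  have hE : Real.exp (-r ^ 2 / (4 * a)) ≤
      Real.exp (-1 / (32 * δ ^ 2)) * Real.exp (-r ^ 2 / (4 * b)) := by
    rw [← Real.exp_add]
    exact Real.exp_le_exp.mpr hB
  calc a⁻¹ * Real.exp (-r ^ 2 / (4 * a))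
      ≤ (2 * δ⁻¹ ^ 2 * b⁻¹) * (Real.exp (-1 / (32 * δ ^ 2)) * Real.exp (-r ^ 2 / (4 * b))) :=
        mul_le_mul hA hE (Real.exp_pos _).le (by positivity)
    _ = 2 * δ⁻¹ ^ 2 * Real.exp (-1 / (32 * δ ^ 2)) * (b⁻¹ * Real.exp (-r ^ 2 / (4 * b))) := by ring
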